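/- Let p be a prime with p ≡ 3 (mod 4) such that the number ν_p of quadratic non-residues strictly between 1 and p/2 is even. Then the congruence (p-1)(p-2)⋯(p-r) ≡ -1 (mod p) has the solution r = (p-1)/2. -/

import Mathlib

set_option maxHeartbeats 1000000

open Finset

/-- In `ZMod p` (`p` an odd prime), the product of two nonzero nonsquares is a square. -/
lemma stmt11_aux_mul {p : ℕ} [Fact p.Prime] (hp2 : p ≠ 2) {a b : ZMod p}
    (ha : a ≠ 0) (hb : b ≠ 0) (hA : ¬ IsSquare a) (hB : ¬ IsSquare b) :
    IsSquare (a * b) := by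
  classical
  have h1 : quadraticChar (ZMod p) a = -1 := quadraticChar_neg_one_iff_not_isSquare.mpr hA
  have h2 : quadraticChar (ZMod p) b = -1 := quadraticChar_neg_one_iff_not_isSquare.mpr hB
  have h3 : quadraticChar (ZMod p) (a * b) = 1 := by
    rw [map_mul, h1, h2]; ring
  exact (quadraticChar_one_iff_isSquare (mul_ne_zero ha hb)).mp h3

/-- In `ZMod p` with `-1` a nonsquare, the negative of a nonzero square is a nonsquare. -/
lemma stmt11_aux_neg {p : ℕ} [Fact p.Prime] (hp2 : p ≠ 2)
    (hns : ¬ IsSquare (-1 : ZMod p)) {s : ZMod p} (hs0 : s ≠ 0) (hs : IsSquare s) :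
    ¬ IsSquare (-s) := by
  classical
  have h1 : quadraticChar (ZMod p) (-1 : ZMod p) = -1 :=
    quadraticChar_neg_one_iff_not_isSquare.mpr hns
  have h2 : quadraticChar (ZMod p) s = 1 := (quadraticChar_one_iff_isSquare hs0).mpr hs
  have h3 : quadraticChar (ZMod p) (-s) = -1 := by
    rw [show (-s : ZMod p) = (-1) * s by ring, map_mul, h1, h2]; ring
  exact quadraticChar_neg_one_iff_not_isSquare.mp h3

theorem stmt11 (p : ℕ) (hp : p.Prime) (h4 : p % 4 = 3)
    (hν : Even ({x : ℕ | 1 < x ∧ 2 * x < p ∧ ¬ ∃ y : ZMod p, y ^ 2 = (x : ZMod p)}.ncard)) :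
    (∏ i ∈ Finset.Icc 1 ((p - 1) / 2), ((p : ℤ) - (i : ℤ))) ≡ -1 [ZMOD p] := by
  classical
  haveI : Fact p.Prime := ⟨hp⟩
  have hp2 : p ≠ 2 := by omega
  have hp3 : 3 ≤ p := hp.two_le.lt_of_ne (Ne.symm hp2)
  set n := (p - 1) / 2 with hn
  have hpn : p = 2 * n + 1 := by omega
  have hnodd : Odd n := by
    refine Nat.odd_iff.mpr ?_
    omega
  set S := Finset.Icc 1 n with hS
  -- basic facts about members of S
  have hmem0 : ∀ a ∈ S, (a : ZMod p) ≠ 0 := by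
    intro a ha h0
    rw [Finset.mem_Icc] at ha
    have hd : p ∣ a := (ZMod.natCast_eq_zero_iff a p).mp h0
    have := Nat.le_of_dvd (by omega) hd
    omega
  have hinj : ∀ a ∈ S, ∀ b ∈ S, (a : ZMod p) = (b : ZMod p) → a = b := by
    intro a ha b hb h
    rw [Finset.mem_Icc] at ha hb
    have := (ZMod.natCast_eq_natCast_iff a b p).mp h
    have h2 := this.eq_of_lt_of_lt (by omega) (by omega)
    exact h2
  have hninj : ∀ a ∈ S, ∀ b ∈ S, (a : ZMod p) = -(b : ZMod p) → False := by
    intro a ha b hb h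
    rw [Finset.mem_Icc] at ha hb
    have h0 : ((a + b : ℕ) : ZMod p) = 0 := by push_cast; rw [h]; ring
    have hd : p ∣ a + b := (ZMod.natCast_eq_zero_iff _ p).mp h0
    have := Nat.le_of_dvd (by omega) hd
    omega
  -- -1 is not a square
  have hns : ¬ IsSquare (-1 : ZMod p) := by
    rw [ZMod.exists_sq_eq_neg_one_iff]
    simp [h4]
  -- the count of nonsquares
  set N := (Finset.filter (fun a : ℕ => ¬ IsSquare ((a : ZMod p))) S).card with hNdef
  have hEvenN : Even N := by
    have hset : {x : ℕ | 1 < x ∧ 2 * x < p ∧ ¬ ∃ y : ZMod p, y ^ 2 = (x : ZMod p)} =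
        ↑(Finset.filter (fun a : ℕ => ¬ IsSquare ((a : ZMod p))) S) := by
      ext x
      have hsq1 : (∃ y : ZMod p, y ^ 2 = (x : ZMod p)) ↔ IsSquare ((x : ZMod p)) := by
        constructor
        · rintro ⟨y, hy⟩; exact ⟨y, by rw [← hy]; ring⟩
        · rintro ⟨y, hy⟩; exact ⟨y, by rw [hy]; ring⟩
      simp only [Set.mem_setOf_eq, Finset.coe_filter, Set.mem_setOf_eq, hS,
        Finset.mem_Icc, hsq1]
      constructor
      · rintro ⟨h1, h2, h3⟩
        exact ⟨⟨by omega, by omega⟩, h3⟩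
      · rintro ⟨⟨h1, h2⟩, h3⟩
        have hx1 : x ≠ 1 := by
          rintro rfl
          exact h3 (by simpa using (isSquare_one : IsSquare (1 : ZMod p)))
        exact ⟨by omega, by omega, h3⟩
    rwa [hset, Set.ncard_coe_finset] at hν
  -- the half factorial
  set F := ∏ a ∈ S, (a : ZMod p) with hFdef
  have hF0 : F ≠ 0 := Finset.prod_ne_zero_iff.mpr hmem0
  -- the sign-adjusted function
  set f : ℕ → ZMod p := fun a => if IsSquare ((a : ZMod p)) then (a : ZMod p) else -(a : ZMod p)
    with hfdef
  have hf0 : ∀ a ∈ S, f a ≠ 0 := by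
    intro a ha
    by_cases h : IsSquare ((a : ZMod p)) <;> simp [hfdef, h, hmem0 a ha]
  have hfsq : ∀ a ∈ S, IsSquare (f a) := by
    intro a ha
    by_cases h : IsSquare ((a : ZMod p))
    · simpa [hfdef, h] using h
    · have : IsSquare ((-1 : ZMod p) * (a : ZMod p)) :=
        stmt11_aux_mul hp2 (by simp) (hmem0 a ha) hns h
      simpa [hfdef, h] using this
  -- step 1 : F = (-1)^N * ∏ f
  have hstep1 : F = (-1 : ZMod p) ^ N * ∏ a ∈ S, f a := by
    have h1 : F = ∏ a ∈ S,
        ((if IsSquare ((a : ZMod p)) then (1 : ZMod p) else -1) * f a) := by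
      apply Finset.prod_congr rfl
      intro a _
      by_cases h : IsSquare ((a : ZMod p)) <;> simp [hfdef, h]
    rw [h1, Finset.prod_mul_distrib]
    congr 1
    rw [Finset.prod_ite, Finset.prod_const, Finset.prod_const, one_pow, one_mul]
  -- step 2 : images agree
  have himg : S.image f = S.image (fun a : ℕ => ((a : ZMod p)) ^ 2) := by
    apply Finset.Subset.antisymm
    · intro z hz
      simp only [Finset.mem_image] at hz ⊢
      obtain ⟨a, ha, rfl⟩ := hz
      obtain ⟨y, hy⟩ := hfsq a ha
      have hy0 : y ≠ 0 := by
        rintro rfl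
        exact hf0 a ha (by simpa using hy)
      have hyval : ((y.val : ℕ) : ZMod p) = y := ZMod.natCast_rightInverse y
      have hc1 : 1 ≤ y.val := by
        rcases Nat.eq_zero_or_pos y.val with h | h
        · exact absurd (by rw [← hyval, h]; simp) hy0
        · exact h
      have hc2 : y.val < p := ZMod.val_lt y
      by_cases hcn : y.val ≤ n
      · refine ⟨y.val, Finset.mem_Icc.mpr ⟨hc1, hcn⟩, ?_⟩
        rw [hyval, sq, ← hy]
      · refine ⟨p - y.val, Finset.mem_Icc.mpr ⟨by omega, by omega⟩, ?_⟩
        have : ((p - y.val : ℕ) : ZMod p) = -y := by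
          push_cast [Nat.cast_sub (le_of_lt hc2)]
          rw [hyval, ZMod.natCast_self]; ring
        rw [this]
        rw [hy]; ring
    · intro z hz
      simp only [Finset.mem_image] at hz ⊢
      obtain ⟨a, ha, rfl⟩ := hz
      set s : ZMod p := (a : ZMod p) ^ 2 with hsdef
      have hs0 : s ≠ 0 := pow_ne_zero _ (hmem0 a ha)
      have hssq : IsSquare s := ⟨(a : ZMod p), by rw [hsdef]; ring⟩
      have hsval : ((s.val : ℕ) : ZMod p) = s := ZMod.natCast_rightInverse s
      have hc1 : 1 ≤ s.val := by
        rcases Nat.eq_zero_or_pos s.val with h | h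
        · exact absurd (by rw [← hsval, h]; simp) hs0
        · exact h
      have hc2 : s.val < p := ZMod.val_lt s
      by_cases hcn : s.val ≤ n
      · refine ⟨s.val, Finset.mem_Icc.mpr ⟨hc1, hcn⟩, ?_⟩
        have hsq' : IsSquare ((s.val : ZMod p)) := by rw [hsval]; exact hssq
        show (if IsSquare ((s.val : ZMod p)) then ((s.val : ℕ) : ZMod p)
          else -((s.val : ℕ) : ZMod p)) = _
        rw [if_pos hsq', hsval]
      · refine ⟨p - s.val, Finset.mem_Icc.mpr ⟨by omega, by omega⟩, ?_⟩
        have hcast : ((p - s.val : ℕ) : ZMod p) = -s := by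
          push_cast [Nat.cast_sub (le_of_lt hc2)]
          rw [hsval, ZMod.natCast_self]; ring
        have hnsq : ¬ IsSquare (-s) := stmt11_aux_neg hp2 hns hs0 hssq
        show (if IsSquare (((p - s.val : ℕ) : ZMod p)) then ((p - s.val : ℕ) : ZMod p)
          else -((p - s.val : ℕ) : ZMod p)) = _
        rw [hcast, if_neg hnsq, neg_neg]
  -- step 2' : products over S of f equal products of squares
  have hfinjOn : ∀ a ∈ S, ∀ b ∈ S, f a = f b → a = b := by
    intro a ha b hb h
    simp only [hfdef] at h
    by_cases h1 : IsSquare ((a : ZMod p)) <;> by_cases h2 : IsSquare ((b : ZMod p))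
    · rw [if_pos h1, if_pos h2] at h; exact hinj a ha b hb h
    · rw [if_pos h1, if_neg h2] at h; exact (hninj a ha b hb h).elim
    · rw [if_neg h1, if_pos h2] at h; exact (hninj b hb a ha h.symm).elim
    · rw [if_neg h1, if_neg h2] at h; exact hinj a ha b hb (neg_inj.mp h)
  have hsqinjOn : ∀ a ∈ S, ∀ b ∈ S, ((a : ZMod p)) ^ 2 = ((b : ZMod p)) ^ 2 → a = b := by
    intro a ha b hb h
    have h' : ((a : ZMod p)) * a = ((b : ZMod p)) * b := by
      rw [← sq, ← sq, h]
    rcases mul_self_eq_mul_self_iff.mp h' with h'' | h''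
    · exact hinj a ha b hb h''
    · exact absurd h'' (by intro hh; exact hninj a ha b hb hh)
  have hstep2 : ∏ a ∈ S, f a = F ^ 2 := by
    have e1 : ∏ z ∈ S.image f, z = ∏ a ∈ S, f a := Finset.prod_image hfinjOn
    have e2 : ∏ z ∈ S.image (fun a : ℕ => ((a : ZMod p)) ^ 2), z = ∏ a ∈ S, ((a : ZMod p)) ^ 2 :=
      Finset.prod_image hsqinjOn
    rw [← e1, himg, e2, ← Finset.prod_pow]
  -- conclude F = 1
  have hNone : (-1 : ZMod p) ^ N = 1 := hEvenN.neg_one_pow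
  have hF1 : F = 1 := by
    have : F * 1 = F * F := by
      rw [mul_one]
      nth_rewrite 1 [hstep1]
      rw [hstep2, hNone, one_mul, sq]
    exact ((mul_left_cancel₀ hF0 this).symm)
  -- final computation
  have hfinal : ((∏ i ∈ S, ((p : ℤ) - (i : ℤ)) : ℤ) : ZMod p) = -1 := by
    push_cast
    have h1 : ∀ i ∈ S, ((p : ZMod p) - (i : ZMod p)) = (-1) * (i : ZMod p) := by
      intro i _
      rw [ZMod.natCast_self]; ring
    rw [Finset.prod_congr rfl h1, Finset.prod_mul_distrib, Finset.prod_const, ← hFdef, hF1,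
      mul_one, hS, Nat.card_Icc]
    simp only [Nat.add_sub_cancel]
    exact hnodd.neg_one_pow
  rw [← ZMod.intCast_eq_intCast_iff]
  rw [hfinal]
  push_cast
  ring
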